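/- The multiset of eigenvalues of a uniform-block matrix N(A, B, p) consists of a_kk with multiplicity p_k − 1 for each k = 1, ..., K, together with the K eigenvalues of the K×K matrix Δ = A + B P, where P = diag(p_1,...,p_K). -/

import Mathlib

open Matrix

/-- `A ∘ I(p)`: block-diagonal matrix with `a k • I_{p k}` as `k`-th diagonal block. -/
noncomputable def blockI {K : ℕ} (p : Fin K → ℕ) (a : Fin K → ℝ) :
    Matrix ((k : Fin K) × Fin (p k)) ((k : Fin K) × Fin (p k)) ℝ :=
  Matrix.diagonal fun x => a x.1

/-- `B ∘ J(p)`: block matrix whose `(k,k')` block is `B k k' • 1_{p k × p k'}`. -/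
noncomputable def blockJ {K : ℕ} (p : Fin K → ℕ) (B : Matrix (Fin K) (Fin K) ℝ) :
    Matrix ((k : Fin K) × Fin (p k)) ((k : Fin K) × Fin (p k)) ℝ :=
  Matrix.of fun x y => B x.1 y.1


/-- Eigenvalues of a uniform-block matrix: its characteristic polynomial is
`∏ₖ (X - a_kk)^(p_k - 1)` times the characteristic polynomial of `Δ = A + B P`. -/
theorem ub_charpoly {K : ℕ} (p : Fin K → ℕ) (hp : ∀ k, 1 < p k)
    (a : Fin K → ℝ) (B : Matrix (Fin K) (Fin K) ℝ) (hB : B.IsSymm) :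
    (blockI p a + blockJ p B).charpoly
      = (∏ k, (Polynomial.X - Polynomial.C (a k)) ^ (p k - 1))
        * (Matrix.diagonal a + B * Matrix.diagonal (fun k => (p k : ℝ))).charpoly := by
  classical
  set F := RatFunc ℝ with hF
  set φ : Polynomial ℝ →+* F := algebraMap (Polynomial ℝ) F with hφ
  apply IsFractionRing.injective (Polynomial ℝ) F
  show φ _ = φ _
  set c : ℝ →+* F := algebraMap ℝ F with hc
  have hcφ : ∀ r : ℝ, φ (Polynomial.C r) = c r := fun r =>
    (IsScalarTower.algebraMap_apply ℝ (Polynomial ℝ) F r).symm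
  set t : F := φ Polynomial.X with ht
  set d0 : Fin K → F := fun k => t - c (a k) with hd0
  have hd0ne : ∀ k, d0 k ≠ 0 := by
    intro k h
    have : φ (Polynomial.X - Polynomial.C (a k)) = φ 0 := by
      rw [map_sub, hcφ, map_zero]; exact h
    have := IsFractionRing.injective (Polynomial ℝ) F this
    exact Polynomial.X_sub_C_ne_zero (a k) this
  set Δ : Matrix (Fin K) (Fin K) ℝ :=
    Matrix.diagonal a + B * Matrix.diagonal (fun k => (p k : ℝ)) with hΔ
  set N := blockI p a + blockJ p B with hN
  -- matrices over F
  set E : Matrix ((k : Fin K) × Fin (p k)) (Fin K) F :=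
    Matrix.of (fun x k => if x.1 = k then 1 else 0) with hE
  set Bt : Matrix (Fin K) (Fin K) F := B.map c with hBt
  set d : ((k : Fin K) × Fin (p k)) → F := fun x => d0 x.1 with hd
  have hdne : ∀ x, d x ≠ 0 := fun x => hd0ne x.1
  -- Step 1: mapped charmatrix of N
  have step1 : (charmatrix N).map φ = Matrix.diagonal d - E * Bt * Eᵀ := by
    ext x y
    have hmul : (E * Bt * Eᵀ) x y = c (B x.1 y.1) := by
      simp [hE, hBt, Matrix.mul_apply, Finset.sum_ite_eq', ite_mul, mul_ite]
    simp only [Matrix.map_apply, charmatrix_apply, Matrix.sub_apply, hmul]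
    rcases eq_or_ne x y with rfl | hxy
    · simp [hN, blockI, blockJ, map_add, hcφ, d, d0, t, Matrix.diagonal_apply_eq,
        Matrix.add_apply]
      ring
    · simp [hN, blockI, blockJ, map_add, hcφ, hxy, Matrix.diagonal_apply_ne _ hxy,
        Matrix.add_apply]
  -- Step 2: factor out diagonal d
  set Dinv : Matrix ((k : Fin K) × Fin (p k)) ((k : Fin K) × Fin (p k)) F :=
    Matrix.diagonal (fun x => (d x)⁻¹) with hDinv
  have hDD : Matrix.diagonal d * Dinv = 1 := by
    rw [hDinv, Matrix.diagonal_mul_diagonal]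
    have : (fun x => d x * (d x)⁻¹) = fun _ => (1:F) := funext fun x => mul_inv_cancel₀ (hdne x)
    rw [this, Matrix.diagonal_one]
  have step2 : Matrix.diagonal d - E * Bt * Eᵀ
      = Matrix.diagonal d * (1 + (-(Dinv * E)) * (Bt * Eᵀ)) := by
    rw [mul_add, mul_one, Matrix.neg_mul, Matrix.mul_neg, ← sub_eq_add_neg]
    congr 1
    rw [← Matrix.mul_assoc, ← Matrix.mul_assoc, ← Matrix.mul_assoc, hDD, Matrix.one_mul,
      Matrix.mul_assoc]
  -- Step 3: the K×K Gram matrix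
  have step3 : Eᵀ * Dinv * E = Matrix.diagonal (fun k => (p k : F) * (d0 k)⁻¹) := by
    ext k k'
    rw [Matrix.mul_apply]
    simp only [Matrix.mul_apply, hDinv, hE, Matrix.transpose_apply, Matrix.of_apply,
      Matrix.diagonal_apply]
    rw [← Finset.univ_sigma_univ, Finset.sum_sigma]
    rcases eq_or_ne k k' with rfl | hkk
    · simp only [if_pos rfl]
      simp [hd, Finset.sum_const, Finset.card_univ, nsmul_eq_mul]
    · simp [Finset.sum_ite_eq', hkk, Ne.symm hkk, Matrix.diagonal_apply_ne _ hkk]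
  -- Step 4
  have step4 : (1 : Matrix (Fin K) (Fin K) F) - Bt * Matrix.diagonal (fun k => (p k : F) * (d0 k)⁻¹)
      = (charmatrix Δ).map φ * Matrix.diagonal (fun k => (d0 k)⁻¹) := by
    ext k k'
    simp only [Matrix.sub_apply, Matrix.mul_diagonal, Matrix.map_apply, charmatrix_apply,
      Matrix.one_apply, Matrix.diagonal_apply, hBt, hΔ, Matrix.add_apply, Matrix.mul_diagonal,
      map_sub, hcφ, map_add, _root_.map_mul, map_natCast]
    simp only [Matrix.mul_apply, Matrix.diagonal_apply, Matrix.map_apply, mul_ite, mul_zero,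
      Finset.sum_ite_eq', Finset.mem_univ, if_true, charmatrix_apply, Matrix.add_apply,
      map_sub, hcφ, map_add, _root_.map_mul, map_natCast]
    rcases eq_or_ne k k' with rfl | hkk
    · simp only [if_pos rfl]
      simp only [if_pos trivial, map_zero]
      have h := hd0ne k
      rw [show φ Polynomial.X = d0 k + c (a k) by simp [hd0, t]]
      rw [show ∀ x y z : F, x + y - (y + z) = x - z from fun x y z => by ring, sub_mul,
        mul_inv_cancel₀ h]
      ring
    · simp only [if_neg hkk, Matrix.diagonal_apply_ne _ hkk, map_zero]
      ring
  -- determinant of diagonal d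
  have hdet : (Matrix.diagonal d).det = ∏ k, d0 k ^ (p k) := by
    rw [Matrix.det_diagonal, ← Finset.univ_sigma_univ, Finset.prod_sigma]
    simp [hd]
  -- assemble
  have key : φ N.charpoly
      = (∏ k, d0 k ^ (p k)) * (φ Δ.charpoly * ∏ k, (d0 k)⁻¹) := by
    rw [Matrix.charpoly, RingHom.map_det, RingHom.mapMatrix_apply, step1, step2,
      Matrix.det_mul, hdet, Matrix.det_one_add_mul_comm]
    congr 1
    rw [Matrix.mul_neg, ← sub_eq_add_neg, Matrix.mul_assoc Bt Eᵀ, ← Matrix.mul_assoc Eᵀ Dinv E,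
      step3, step4, Matrix.det_mul,
      Matrix.det_diagonal, Matrix.charpoly, RingHom.map_det, RingHom.mapMatrix_apply]
  rw [hN] at key
  rw [key, _root_.map_mul]
  have hφprod : φ (∏ k, (Polynomial.X - Polynomial.C (a k)) ^ (p k - 1))
      = ∏ k, d0 k ^ (p k - 1) := by
    rw [map_prod]
    refine Finset.prod_congr rfl fun k _ => ?_
    rw [map_pow, map_sub, hcφ]
  rw [hφprod]
  rw [mul_comm (φ Δ.charpoly), ← mul_assoc, ← Finset.prod_mul_distrib]
  congr 1
  refine Finset.prod_congr rfl fun k _ => ?_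
  rw [pow_sub₀ (d0 k) (hd0ne k) (hp k).le, pow_one]
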